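/- In a deterministic MDP where every state can reach every other state in at most k steps (k-communicating), the optimal value function for any reward in [0,1]^S has oscillation at most (1 − γ^k)/(1 − γ): sup_s V*(s) − inf_s V*(s) ≤ (1 − γ^k)/(1 − γ). -/

import Mathlib

open scoped BigOperators

/-- Trajectory of a deterministic MDP under policy (action sequence) `π` from state `s`. -/
def traj {S A : Type*} (T : S → A → S) (s : S) (π : ℕ → A) : ℕ → S
  | 0 => s
  | n + 1 => T (traj T s π n) (π n)

/-- Optimal (supremal) discounted value of state `s`. -/
noncomputable def Vstar {S A : Type*} (T : S → A → S) (R : S → ℝ) (γ : ℝ) (s : S) : ℝ :=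
  ⨆ π : ℕ → A, ∑' t : ℕ, γ ^ t * R (traj T s π t)

/-- `s` can reach `s'` in exactly `k` steps. -/
def Reaches {S A : Type*} (T : S → A → S) (s s' : S) (k : ℕ) : Prop :=
  ∃ π : ℕ → A, traj T s π k = s'

section Aux

variable {S A : Type*} (T : S → A → S) (R : S → ℝ) {γ : ℝ}

lemma traj_prefix (s : S) (σ π' : ℕ → A) (k : ℕ) :
    ∀ m, m ≤ k → traj T s (fun n => if n < k then σ n else π' (n - k)) m = traj T s σ m := by
  intro m hm
  induction m with
  | zero => rfl
  | succ m ih =>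
    have h1 : m < k := hm
    simp [traj, ih (le_of_lt h1), h1]

lemma traj_shift (s s' : S) (σ π' : ℕ → A) (k : ℕ) (h : traj T s σ k = s') :
    ∀ n, traj T s (fun n => if n < k then σ n else π' (n - k)) (k + n) = traj T s' π' n := by
  intro n
  induction n with
  | zero => exact (traj_prefix T s σ π' k k le_rfl).trans h
  | succ n ih =>
    have hk : ¬ (k + n < k) := by omega
    have hs : k + n - k = n := by omega
    show traj T s _ ((k + n) + 1) = _
    simp only [traj, ih, hk, if_false, hs]

lemma term_nonneg (hγ0 : 0 ≤ γ) (hR : ∀ s, R s ∈ Set.Icc (0 : ℝ) 1) (s : S) (π : ℕ → A) (t : ℕ) :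
    0 ≤ γ ^ t * R (traj T s π t) :=
  mul_nonneg (pow_nonneg hγ0 t) (hR _).1

lemma term_le (hγ0 : 0 ≤ γ) (hR : ∀ s, R s ∈ Set.Icc (0 : ℝ) 1) (s : S) (π : ℕ → A) (t : ℕ) :
    γ ^ t * R (traj T s π t) ≤ γ ^ t := by
  nlinarith [(hR (traj T s π t)).2, pow_nonneg hγ0 t]

lemma summable_val (hγ0 : 0 ≤ γ) (hγ1 : γ < 1) (hR : ∀ s, R s ∈ Set.Icc (0 : ℝ) 1)
    (s : S) (π : ℕ → A) : Summable (fun t : ℕ => γ ^ t * R (traj T s π t)) :=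
  Summable.of_nonneg_of_le (term_nonneg T R hγ0 hR s π) (term_le T R hγ0 hR s π)
    (summable_geometric_of_lt_one hγ0 hγ1)

lemma val_nonneg (hγ0 : 0 ≤ γ) (hγ1 : γ < 1) (hR : ∀ s, R s ∈ Set.Icc (0 : ℝ) 1)
    (s : S) (π : ℕ → A) : 0 ≤ ∑' t : ℕ, γ ^ t * R (traj T s π t) :=
  tsum_nonneg (term_nonneg T R hγ0 hR s π)

lemma val_le (hγ0 : 0 ≤ γ) (hγ1 : γ < 1) (hR : ∀ s, R s ∈ Set.Icc (0 : ℝ) 1)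
    (s : S) (π : ℕ → A) : ∑' t : ℕ, γ ^ t * R (traj T s π t) ≤ 1 / (1 - γ) := by
  have := Summable.tsum_le_tsum (term_le T R hγ0 hR s π) (summable_val T R hγ0 hγ1 hR s π)
    (summable_geometric_of_lt_one hγ0 hγ1)
  rwa [tsum_geometric_of_lt_one hγ0 hγ1, ← one_div] at this

lemma bdd (hγ0 : 0 ≤ γ) (hγ1 : γ < 1) (hR : ∀ s, R s ∈ Set.Icc (0 : ℝ) 1) (s : S) :
    BddAbove (Set.range fun π : ℕ → A => ∑' t : ℕ, γ ^ t * R (traj T s π t)) :=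
  ⟨1 / (1 - γ), by rintro _ ⟨π, rfl⟩; exact val_le T R hγ0 hγ1 hR s π⟩

lemma Vstar_nonneg [Nonempty A] (hγ0 : 0 ≤ γ) (hγ1 : γ < 1) (hR : ∀ s, R s ∈ Set.Icc (0 : ℝ) 1)
    (s : S) : 0 ≤ Vstar T R γ s :=
  le_ciSup_of_le (bdd T R hγ0 hγ1 hR s) (Classical.arbitrary _)
    (val_nonneg T R hγ0 hγ1 hR s _)

lemma Vstar_le [Nonempty A] (hγ0 : 0 ≤ γ) (hγ1 : γ < 1) (hR : ∀ s, R s ∈ Set.Icc (0 : ℝ) 1)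
    (s : S) : Vstar T R γ s ≤ 1 / (1 - γ) :=
  ciSup_le fun π => val_le T R hγ0 hγ1 hR s π

lemma Vstar_reach [Nonempty A] (hγ0 : 0 ≤ γ) (hγ1 : γ < 1)
    (hR : ∀ s, R s ∈ Set.Icc (0 : ℝ) 1) {s s' : S} {k : ℕ} (h : Reaches T s s' k) :
    γ ^ k * Vstar T R γ s' ≤ Vstar T R γ s := by
  obtain ⟨σ, hσ⟩ := h
  rw [Vstar, Real.mul_iSup_of_nonneg (pow_nonneg hγ0 k)]
  refine ciSup_le fun π' => ?_
  set π : ℕ → A := fun n => if n < k then σ n else π' (n - k) with hπ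
  have key : ∀ n, γ ^ (n + k) * R (traj T s π (n + k)) = γ ^ k * (γ ^ n * R (traj T s' π' n)) := by
    intro n
    rw [show n + k = k + n from Nat.add_comm n k, traj_shift T s s' σ π' k hσ n, pow_add]
    ring
  have hsum := summable_val T R hγ0 hγ1 hR s π
  have h1 : γ ^ k * ∑' t : ℕ, γ ^ t * R (traj T s' π' t)
      = ∑' n : ℕ, γ ^ (n + k) * R (traj T s π (n + k)) := by
    rw [← tsum_mul_left]
    exact tsum_congr fun n => (key n).symm
  have h2 := Summable.sum_add_tsum_nat_add (f := fun t : ℕ => γ ^ t * R (traj T s π t)) k hsum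
  have h3 : 0 ≤ ∑ i ∈ Finset.range k, γ ^ i * R (traj T s π i) :=
    Finset.sum_nonneg fun i _ => term_nonneg T R hγ0 hR s π i
  calc γ ^ k * ∑' t : ℕ, γ ^ t * R (traj T s' π' t)
      = ∑' n : ℕ, γ ^ (n + k) * R (traj T s π (n + k)) := h1
    _ ≤ ∑' t : ℕ, γ ^ t * R (traj T s π t) := by linarith
    _ ≤ Vstar T R γ s := le_ciSup (bdd T R hγ0 hγ1 hR s) π

end Aux

theorem stmt_16 {S A : Type*} [Fintype S] [Nonempty S] [Fintype A] [Nonempty A]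
    (T : S → A → S) (R : S → ℝ) (γ : ℝ) (hγ0 : 0 ≤ γ) (hγ1 : γ < 1)
    (hR : ∀ s, R s ∈ Set.Icc (0 : ℝ) 1) (k : ℕ)
    (hcomm : ∀ s s' : S, Reaches T s s' k) :
    (⨆ s : S, Vstar T R γ s) - ⨅ s : S, Vstar T R γ s ≤ (1 - γ ^ k) / (1 - γ) := by
  have h1γ : (0:ℝ) < 1 - γ := by linarith
  have hγk : γ ^ k ≤ 1 := pow_le_one₀ hγ0 (le_of_lt hγ1)
  rw [sub_le_iff_le_add]
  refine ciSup_le fun s => ?_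
  have hinf : Vstar T R γ s - (1 - γ ^ k) / (1 - γ) ≤ ⨅ s' : S, Vstar T R γ s' := by
    refine le_ciInf fun s' => ?_
    rw [sub_le_iff_le_add]
    have hr := Vstar_reach T R hγ0 hγ1 hR (hcomm s' s)
    have hub := Vstar_le T R (A := A) hγ0 hγ1 hR s
    have : Vstar T R γ s - Vstar T R γ s' ≤ (1 - γ ^ k) * Vstar T R γ s := by linarith
    have h2 : (1 - γ ^ k) * Vstar T R γ s ≤ (1 - γ ^ k) * (1 / (1 - γ)) :=
      mul_le_mul_of_nonneg_left hub (by linarith)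
    have h3 : (1 - γ ^ k) * (1 / (1 - γ)) = (1 - γ ^ k) / (1 - γ) := by ring
    linarith
  linarith
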